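/- arXiv:2605.24331 — 2 statements merged into one kernel-verified Lean document; each statement's English description precedes it below -/
import Mathlib

section
/- Let μ_θ and μ_ref be probability measures on [0,1] with CDFs F_θ and F_ref, where μ_θ has a density f_θ bounded by ‖f_θ‖_∞ < ∞. Let ψ : [0,1] → ℝ be L-Lipschitz. Then |∫ ψ(F_ref(t)) dμ_θ(t) − ∫ ψ(F_θ(t)) dμ_θ(t)| ≤ L · ‖f_θ‖_∞ · W₁(μ_ref, μ_θ), where W₁(μ,ν) = ∫_ℝ |F_μ(t) − F_ν(t)| dt is the 1-Wasserstein distance. -/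
open MeasureTheory

private lemma cdf_one (μ : Measure ℝ) [IsProbabilityMeasure μ] (h : μ (Set.Icc (0:ℝ) 1)ᶜ = 0)
    {t : ℝ} (ht : 1 ≤ t) : μ (Set.Icc 0 t) = 1 := by
  refine le_antisymm prob_le_one ?_
  rw [show (1:ENNReal) = μ Set.univ from (measure_univ).symm]
  calc μ Set.univ ≤ μ (Set.Icc 0 t ∪ (Set.Icc (0:ℝ) 1)ᶜ) := by
        refine measure_mono fun x _ => ?_
        by_cases hx : x ∈ Set.Icc (0:ℝ) 1
        · exact Or.inl ⟨hx.1, hx.2.trans ht⟩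
        · exact Or.inr hx
    _ ≤ μ (Set.Icc 0 t) + μ (Set.Icc (0:ℝ) 1)ᶜ := measure_union_le _ _
    _ = μ (Set.Icc 0 t) := by rw [h, add_zero]

private lemma cdf_meas (μ : Measure ℝ) [IsProbabilityMeasure μ] :
    Measurable fun t => (μ (Set.Icc 0 t)).toReal :=
  Monotone.measurable fun _ _ hab =>
    ENNReal.toReal_mono (measure_ne_top _ _) (measure_mono (Set.Icc_subset_Icc_right hab))

theorem stmt5 (μθ μref : Measure ℝ) [IsProbabilityMeasure μθ] [IsProbabilityMeasure μref]
    (hθs : μθ (Set.Icc (0:ℝ) 1)ᶜ = 0) (hrs : μref (Set.Icc (0:ℝ) 1)ᶜ = 0)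
    (f : ℝ → NNReal) (hdens : μθ = volume.withDensity (fun t => (f t : ENNReal)))
    (M : ℝ) (hM : ∀ t, (f t : ℝ) ≤ M)
    (L : NNReal) (ψ : ℝ → ℝ) (hψ : LipschitzWith L ψ) :
    |(∫ t, ψ ((μref (Set.Icc 0 t)).toReal) ∂μθ) -
        ∫ t, ψ ((μθ (Set.Icc 0 t)).toReal) ∂μθ|
      ≤ L * M * ∫ t, |(μref (Set.Icc 0 t)).toReal - (μθ (Set.Icc 0 t)).toReal| := by
  set Fr := fun t => (μref (Set.Icc 0 t)).toReal with hFr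
  set Ft := fun t => (μθ (Set.Icc 0 t)).toReal with hFt
  set D := fun t => |Fr t - Ft t| with hD
  have hM0 : 0 ≤ M := le_trans (f 0).coe_nonneg (hM 0)
  have hmr : Measurable Fr := cdf_meas μref
  have hmt : Measurable Ft := cdf_meas μθ
  have hmD : Measurable D := (hmr.sub hmt).abs
  -- bounds on F
  have hF01 : ∀ (μ : Measure ℝ) (_ : IsProbabilityMeasure μ) t,
      (μ (Set.Icc 0 t)).toReal ∈ Set.Icc (0:ℝ) 1 := by
    intro μ hμ t
    constructor
    · exact ENNReal.toReal_nonneg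
    · rw [show (1:ℝ) = (1:ENNReal).toReal from rfl]
      exact ENNReal.toReal_mono ENNReal.one_ne_top prob_le_one
  have hD1 : ∀ t, D t ≤ 1 := by
    intro t
    have h1 := hF01 μref inferInstance t
    have h2 := hF01 μθ inferInstance t
    rw [hD, abs_sub_le_iff]
    constructor <;> linarith [h1.1, h1.2, h2.1, h2.2]
  -- D vanishes outside [0,1]
  have hDz : ∀ t, t ∉ Set.Icc (0:ℝ) 1 → D t = 0 := by
    intro t ht
    rcases lt_or_ge t 0 with h | h
    · simp [hD, hFr, hFt, Set.Icc_eq_empty_of_lt h]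
    · have h1 : 1 ≤ t := by
        by_contra hc
        exact ht ⟨h, (lt_of_not_ge hc).le⟩
      simp [hD, hFr, hFt, cdf_one μref hrs h1, cdf_one μθ hθs h1]
  -- ψ composed with F is bounded
  have hbound : ∀ x ∈ Set.Icc (0:ℝ) 1, |ψ x| ≤ |ψ 0| + L := by
    intro x hx
    have := hψ.dist_le_mul x 0
    rw [Real.dist_eq, Real.dist_eq, sub_zero] at this
    have hxa : |x| ≤ 1 := abs_le.2 ⟨by linarith [hx.1], hx.2⟩
    calc |ψ x| ≤ |ψ x - ψ 0| + |ψ 0| := by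
          have := abs_sub_abs_le_abs_sub (ψ x) (ψ 0); linarith [abs_abs (ψ 0)]
      _ ≤ L * |x| + |ψ 0| := by linarith
      _ ≤ |ψ 0| + L := by nlinarith [L.coe_nonneg]
  have hint : ∀ (F : ℝ → ℝ) (_ : Measurable F) (_ : ∀ t, F t ∈ Set.Icc (0:ℝ) 1),
      Integrable (fun t => ψ (F t)) μθ := by
    intro F hmF hF
    refine Integrable.mono' (integrable_const (|ψ 0| + L)) ?_ ?_
    · exact (hψ.continuous.measurable.comp hmF).aestronglyMeasurable
    · exact Filter.Eventually.of_forall fun t => by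
        simpa using hbound (F t) (hF t)
  have hir : Integrable (fun t => ψ (Fr t)) μθ := hint Fr hmr fun t => hF01 μref inferInstance t
  have hit : Integrable (fun t => ψ (Ft t)) μθ := hint Ft hmt fun t => hF01 μθ inferInstance t
  have hiD : Integrable (fun t => (L : ℝ) * D t) μθ := by
    refine Integrable.mono' (integrable_const ((L:ℝ) * 1)) ?_ ?_
    · exact ((measurable_const.mul hmD)).aestronglyMeasurable
    · refine Filter.Eventually.of_forall fun t => ?_
      rw [Real.norm_eq_abs, abs_of_nonneg (mul_nonneg L.coe_nonneg (abs_nonneg _))]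
      exact mul_le_mul_of_nonneg_left (hD1 t) L.coe_nonneg
  -- step 1
  have step1 : |(∫ t, ψ (Fr t) ∂μθ) - ∫ t, ψ (Ft t) ∂μθ| ≤ ∫ t, (L : ℝ) * D t ∂μθ := by
    rw [← integral_sub hir hit]
    calc |∫ t, (ψ (Fr t) - ψ (Ft t)) ∂μθ| ≤ ∫ t, |ψ (Fr t) - ψ (Ft t)| ∂μθ :=
          by simpa [Real.norm_eq_abs] using
            norm_integral_le_integral_norm (μ := μθ) fun t => ψ (Fr t) - ψ (Ft t)
      _ ≤ ∫ t, (L : ℝ) * D t ∂μθ := by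
          refine integral_mono (hir.sub hit).abs hiD fun t => ?_
          have := hψ.dist_le_mul (Fr t) (Ft t)
          rw [Real.dist_eq, Real.dist_eq] at this
          exact this
  refine step1.trans ?_
  rw [integral_const_mul]
  -- step 2: ∫ D dμθ ≤ M * ∫ D dvolume, then multiply by L
  have hμle : μθ ≤ (ENNReal.ofReal M) • volume := by
    rw [hdens, Measure.le_iff]
    intro s hs
    rw [withDensity_apply _ hs, Measure.smul_apply, smul_eq_mul, ← setLIntegral_const]
    refine lintegral_mono fun t => ?_
    rw [← ENNReal.ofReal_coe_nnreal]
    exact ENNReal.ofReal_le_ofReal (hM t)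
  have hDnn : ∀ t, 0 ≤ D t := fun t => abs_nonneg _
  have heq1 : ∫ t, D t ∂μθ = (∫⁻ t, ENNReal.ofReal (D t) ∂μθ).toReal :=
    integral_eq_lintegral_of_nonneg_ae (Filter.Eventually.of_forall hDnn)
      hmD.aestronglyMeasurable
  have heq2 : ∫ t, D t = (∫⁻ t, ENNReal.ofReal (D t)).toReal :=
    integral_eq_lintegral_of_nonneg_ae (Filter.Eventually.of_forall hDnn)
      hmD.aestronglyMeasurable
  have hfin : ∫⁻ t, ENNReal.ofReal (D t) ≠ ⊤ := by
    have hb : ∀ t, ENNReal.ofReal (D t) ≤ (Set.Icc (0:ℝ) 1).indicator (fun _ => 1) t := by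
      intro t
      by_cases ht : t ∈ Set.Icc (0:ℝ) 1
      · rw [Set.indicator_of_mem ht]
        exact ENNReal.ofReal_le_one.2 (hD1 t)
      · rw [Set.indicator_of_notMem ht, hDz t ht]
        simp
    refine ne_top_of_le_ne_top ?_ (lintegral_mono hb)
    rw [lintegral_indicator measurableSet_Icc]
    simp [Real.volume_Icc]
  have hle2 : ∫⁻ t, ENNReal.ofReal (D t) ∂μθ ≤ ENNReal.ofReal M * ∫⁻ t, ENNReal.ofReal (D t) := by
    calc ∫⁻ t, ENNReal.ofReal (D t) ∂μθ
        ≤ ∫⁻ t, ENNReal.ofReal (D t) ∂((ENNReal.ofReal M) • volume) := lintegral_mono' hμle le_rfl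
      _ = ENNReal.ofReal M * ∫⁻ t, ENNReal.ofReal (D t) := lintegral_smul_measure _ _
  have step2 : ∫ t, D t ∂μθ ≤ M * ∫ t, D t := by
    rw [heq1, heq2]
    calc (∫⁻ t, ENNReal.ofReal (D t) ∂μθ).toReal
        ≤ (ENNReal.ofReal M * ∫⁻ t, ENNReal.ofReal (D t)).toReal := by
          refine ENNReal.toReal_mono ?_ hle2
          exact ENNReal.mul_ne_top ENNReal.ofReal_ne_top hfin
      _ = M * (∫⁻ t, ENNReal.ofReal (D t)).toReal := by
          rw [ENNReal.toReal_mul, ENNReal.toReal_ofReal hM0]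
  calc (L : ℝ) * ∫ t, D t ∂μθ ≤ (L : ℝ) * (M * ∫ t, D t) :=
        mul_le_mul_of_nonneg_left step2 L.coe_nonneg
    _ = L * M * ∫ t, D t := by ring
end

section
/- Let ψ : [0,1] → ℝ be strictly increasing and continuous, and let F : [0,1] → [0,1] be a continuous CDF with F(1) = 1 and density f. If ψ'(p) = ψ'(F(p))·f(p) for all p ∈ (0,1), then F(p) = p for all p ∈ [0,1]. Conversely, if F(p) = p then the identity holds. -/
theorem stmt11 (ψ F f : ℝ → ℝ)
    (hψ_mono : StrictMonoOn ψ (Set.Icc 0 1))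
    (hψ_cont : ContinuousOn ψ (Set.Icc 0 1))
    (hψ_diff : ∀ t ∈ Set.Icc (0:ℝ) 1, DifferentiableAt ℝ ψ t)
    (hF_cont : ContinuousOn F (Set.Icc 0 1))
    (hF_map : ∀ p ∈ Set.Icc (0:ℝ) 1, F p ∈ Set.Icc (0:ℝ) 1)
    (hF1 : F 1 = 1)
    (hF_deriv : ∀ p ∈ Set.Ioo (0:ℝ) 1, HasDerivAt F (f p) p) :
    (∀ p ∈ Set.Ioo (0:ℝ) 1, deriv ψ p = deriv ψ (F p) * f p) ↔
      (∀ p ∈ Set.Icc (0:ℝ) 1, F p = p) := by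
  constructor
  · intro h
    set g : ℝ → ℝ := fun x => ψ (F x) - ψ x with hg
    have hg_cont : ContinuousOn g (Set.Icc 0 1) :=
      (hψ_cont.comp hF_cont hF_map).sub hψ_cont
    have hg_deriv : ∀ p ∈ Set.Ioo (0:ℝ) 1, HasDerivAt g 0 p := by
      intro p hp
      have hp' : p ∈ Set.Icc (0:ℝ) 1 := Set.Ioo_subset_Icc_self hp
      have h1 : HasDerivAt (fun x => ψ (F x)) (deriv ψ (F p) * f p) p :=
        ((hψ_diff (F p) (hF_map p hp')).hasDerivAt).comp p (hF_deriv p hp)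
      have h2 : HasDerivAt ψ (deriv ψ p) p := (hψ_diff p hp').hasDerivAt
      have := h1.sub h2
      rw [h p hp] at this
      rw [sub_self] at this; exact this
    -- F = id on Ioo
    have hIoo : ∀ p ∈ Set.Ioo (0:ℝ) 1, F p = p := by
      intro p hp
      have hsub : Set.Icc p 1 ⊆ Set.Icc (0:ℝ) 1 :=
        Set.Icc_subset_Icc hp.1.le le_rfl
      have hconst := constant_of_has_deriv_right_zero (hg_cont.mono hsub)
        (fun x hx => (hg_deriv x ⟨lt_of_lt_of_le hp.1 hx.1, hx.2⟩).hasDerivWithinAt)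
        1 (Set.right_mem_Icc.2 hp.2.le)
      have hgp : g 1 = g p := hconst
      have : ψ (F p) = ψ p := by
        have : ψ (F 1) - ψ 1 = ψ (F p) - ψ p := hgp
        rw [hF1] at this
        linarith
      exact hψ_mono.injOn (hF_map p (Set.Ioo_subset_Icc_self hp))
        (Set.Ioo_subset_Icc_self hp) this
    intro p hp
    rcases eq_or_lt_of_le hp.1 with h0 | h0
    · -- p = 0, use continuity
      subst h0
      haveI : (nhdsWithin (0:ℝ) (Set.Ioo 0 1)).NeBot := by
        rw [← mem_closure_iff_nhdsWithin_neBot, closure_Ioo (by norm_num : (0:ℝ) ≠ 1)]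
        exact Set.left_mem_Icc.2 (by norm_num)
      have hF0 : Filter.Tendsto F (nhdsWithin 0 (Set.Ioo 0 1)) (nhds (F 0)) :=
        (hF_cont.continuousWithinAt hp).mono Set.Ioo_subset_Icc_self
      have hid : Filter.Tendsto F (nhdsWithin 0 (Set.Ioo 0 1)) (nhds 0) := by
        refine Filter.Tendsto.congr' ?_ (Filter.tendsto_id.mono_left nhdsWithin_le_nhds)
        filter_upwards [self_mem_nhdsWithin] with x hx
        exact (hIoo x hx).symm
      exact tendsto_nhds_unique hF0 hid
    · rcases eq_or_lt_of_le hp.2 with h1 | h1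
      · rw [h1]; exact hF1
      · exact hIoo p ⟨h0, h1⟩
  · intro h p hp
    have hfp : f p = 1 := by
      have h1 : HasDerivAt F 1 p := by
        have : HasDerivAt (id : ℝ → ℝ) 1 p := hasDerivAt_id p
        refine this.congr_of_eventuallyEq ?_
        filter_upwards [Ioo_mem_nhds hp.1 hp.2] with x hx
        exact h x (Set.Ioo_subset_Icc_self hx)
      exact (hF_deriv p hp).unique h1
    rw [h p (Set.Ioo_subset_Icc_self hp), hfp, mul_one]
end
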